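/- Let n be a positive integer, H : (Fin n → ℝ) → ℝ continuously differentiable, and σ : Fin n ≃ Fin n a permutation (an update ordering of the coordinates). Given Y, Ŷ : Fin n → ℝ, for each k : Fin n define the dual-partition AVF discrete gradient component at coordinate σ(k) by Ḡ_{σ(k)} = ∫₀¹ ∂_{σ(k)}H(Z_k(θ)) dθ, where Z_k(θ) is the vector whose σ(j)-th coordinate equals Ŷ_{σ(j)} for j < k, equals θŶ_{σ(k)} + (1−θ)Y_{σ(k)} for j = k, and equals Y_{σ(j)} for j > k. Then Ḡ is a discrete gradient of H: Σ_k Ḡ_{σ(k)} · (Ŷ_{σ(k)} − Y_{σ(k)}) = H(Ŷ) − H(Y). -/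

import Mathlib

/-- Lemma 1 of the paper: the dual-partition AVF vector field is a discrete gradient.
For any update ordering `σ` of the coordinates, with `Z_k(θ)` carrying new values at
coordinates updated before position `k`, the interpolated value at position `k`, and
old values after position `k`, one has
`Σ_k Ḡ_{σ(k)} (Ŷ_{σ(k)} − Y_{σ(k)}) = H(Ŷ) − H(Y)`. -/
theorem dual_partition_avf_discrete_gradient (n : ℕ) (hn : 0 < n)
    (H : (Fin n → ℝ) → ℝ) (hH : ContDiff ℝ 1 H)
    (σ : Equiv.Perm (Fin n))
    (Y Yh : Fin n → ℝ) :
    ∑ k : Fin n,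
        (∫ θ in (0:ℝ)..1,
          fderiv ℝ H
            (fun m => if σ.symm m < k then Yh m
              else if σ.symm m = k then θ * Yh m + (1 - θ) * Y m
              else Y m)
            (Pi.single (σ k) 1)) * (Yh (σ k) - Y (σ k))
      = H Yh - H Y := by
  classical
  set A : ℕ → (Fin n → ℝ) := fun t m => if ((σ.symm m : Fin n) : ℕ) < t then Yh m else Y m
    with hA
  have hA0 : A 0 = Y := by funext m; simp [hA]
  have hAn : A n = Yh := by
    funext m; simp [hA, (σ.symm m).isLt]
  have main : ∀ k : Fin n,
      (∫ θ in (0:ℝ)..1,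
          fderiv ℝ H
            (fun m => if σ.symm m < k then Yh m
              else if σ.symm m = k then θ * Yh m + (1 - θ) * Y m
              else Y m)
            (Pi.single (σ k) 1)) * (Yh (σ k) - Y (σ k))
        = H (A ((k : ℕ) + 1)) - H (A (k : ℕ)) := by
    intro k
    set c : ℝ := Yh (σ k) - Y (σ k) with hc
    set v : Fin n → ℝ := Pi.single (σ k) c with hv
    have hvs : v = c • (Pi.single (σ k) (1 : ℝ) : Fin n → ℝ) := by
      rw [hv, ← Pi.single_smul, smul_eq_mul, mul_one]
    have hne : ∀ m : Fin n, m ≠ σ k → v m = 0 := by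
      intro m hm; simp [hv, Pi.single_apply, hm]
    have hZ : ∀ θ : ℝ,
        (fun m => if σ.symm m < k then Yh m
              else if σ.symm m = k then θ * Yh m + (1 - θ) * Y m
              else Y m) = A (k : ℕ) + θ • v := by
      intro θ; funext m
      simp only [Pi.add_apply, Pi.smul_apply, smul_eq_mul, hA]
      by_cases h1 : σ.symm m < k
      · have hm : m ≠ σ k := by
          intro h; subst h; simp at h1
        rw [if_pos h1, if_pos (by exact_mod_cast h1), hne m hm]
        ring
      · by_cases h2 : σ.symm m = k
        · have hm : m = σ k := by
            have := congrArg σ h2; simpa using this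
          rw [if_neg h1, if_pos h2, if_neg (by exact_mod_cast h1), hm]
          simp only [hv, Pi.single_eq_same, hc]
          ring
        · have hm : m ≠ σ k := by
            intro h; subst h; simp at h2
          rw [if_neg h1, if_neg h2, if_neg (by exact_mod_cast h1), hne m hm]
          ring
    have hγc : Continuous fun θ : ℝ => A (k : ℕ) + θ • v :=
      continuous_const.add (continuous_id.smul continuous_const)
    have hderiv : ∀ θ ∈ Set.uIcc (0:ℝ) 1,
        HasDerivAt (fun t : ℝ => H (A (k : ℕ) + t • v))
          (fderiv ℝ H (A (k : ℕ) + θ • v) v) θ := by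
      intro θ _
      have hγ : HasDerivAt (fun t : ℝ => A (k : ℕ) + t • v) v θ := by
        have h1 : HasDerivAt (fun t : ℝ => t • v) ((1:ℝ) • v) θ :=
          (hasDerivAt_id θ).smul_const v
        simpa using h1.const_add (A (k : ℕ))
      exact ((hH.differentiable one_ne_zero) _).hasFDerivAt.comp_hasDerivAt θ hγ
    have hcont : Continuous fun θ : ℝ => fderiv ℝ H (A (k : ℕ) + θ • v) v :=
      ((hH.continuous_fderiv one_ne_zero).comp hγc).clm_apply continuous_const
    have hFTC := intervalIntegral.integral_eq_sub_of_hasDerivAt hderiv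
      (hcont.intervalIntegrable 0 1)
    have hend1 : A (k : ℕ) + (1:ℝ) • v = A ((k : ℕ) + 1) := by
      funext m
      by_cases hm : m = σ k
      · subst hm
        simp [hA, hv, hc, Pi.single_eq_same]
      · have h2 : ((σ.symm m : Fin n) : ℕ) ≠ (k : ℕ) := by
          intro h
          apply hm
          have : σ.symm m = k := Fin.ext h
          have := congrArg σ this; simpa using this
        simp only [Pi.add_apply, Pi.smul_apply, one_smul, hne m hm, add_zero, hA]
        have : (((σ.symm m : Fin n) : ℕ) < (k : ℕ) + 1) ↔ (((σ.symm m : Fin n) : ℕ) < (k : ℕ)) := by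
          omega
        simp only [this]
    have hend0 : A (k : ℕ) + (0:ℝ) • v = A (k : ℕ) := by simp
    rw [hend1, hend0] at hFTC
    rw [← hFTC, ← intervalIntegral.integral_mul_const]
    apply intervalIntegral.integral_congr
    intro θ _
    dsimp only
    have hlin : ∀ x : Fin n → ℝ,
        (fderiv ℝ H x) v = (fderiv ℝ H x) (Pi.single (σ k) 1) * c := by
      intro x
      rw [hvs, map_smul, smul_eq_mul, mul_comm]
    rw [hZ θ, hlin]
  calc ∑ k : Fin n,
        (∫ θ in (0:ℝ)..1,
          fderiv ℝ H
            (fun m => if σ.symm m < k then Yh m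
              else if σ.symm m = k then θ * Yh m + (1 - θ) * Y m
              else Y m)
            (Pi.single (σ k) 1)) * (Yh (σ k) - Y (σ k))
      = ∑ k : Fin n, (H (A ((k : ℕ) + 1)) - H (A (k : ℕ))) :=
        Finset.sum_congr rfl fun k _ => main k
    _ = ∑ i ∈ Finset.range n, (H (A (i + 1)) - H (A i)) :=
        Fin.sum_univ_eq_sum_range (fun i => H (A (i + 1)) - H (A i)) n
    _ = H (A n) - H (A 0) := Finset.sum_range_sub (fun i => H (A i)) n
    _ = H Yh - H Y := by rw [hA0, hAn]
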